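/- Let Γ be a connected simple graph on a finite vertex set, let uv be an edge of Γ, and let x, y be two distinct non-adjacent vertices of Γ such that the graph Γ' obtained from Γ by deleting the edge uv and adding the edge xy is connected. Then there exists a finite sequence of edge slides transforming Γ into Γ'. (In words: any move of a single edge which preserves connectedness is a combination of edge slides.) -/

import Mathlib

/-- An edge slide: given distinct vertices `x, y, z` with `x ~ y`, `y ~ z` and `x ≁ z`,
slide the edge `xy` to `xz`. -/
def EdgeSlide {V : Type*} (G G' : SimpleGraph V) : Prop :=
  ∃ x y z : V, x ≠ z ∧ G.Adj x y ∧ G.Adj y z ∧ ¬ G.Adj x z ∧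
    G' = G.deleteEdges {s(x, y)} ⊔ SimpleGraph.fromEdgeSet {s(x, z)}

namespace EdgeSlideAux

variable {V : Type*}

def repl (G : SimpleGraph V) (e f : Sym2 V) : SimpleGraph V :=
  G.deleteEdges {e} ⊔ SimpleGraph.fromEdgeSet {f}

lemma repl_adj (G : SimpleGraph V) (e f : Sym2 V) (p q : V) :
    (repl G e f).Adj p q ↔ (G.Adj p q ∧ s(p, q) ≠ e) ∨ (s(p, q) = f ∧ p ≠ q) := by
  simp [repl, SimpleGraph.deleteEdges_adj, SimpleGraph.fromEdgeSet_adj]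

lemma repl_edgeSet (G : SimpleGraph V) (e : Sym2 V) {c d : V} (hcd : c ≠ d) :
    (repl G e s(c, d)).edgeSet = insert s(c, d) (G.edgeSet \ {e}) := by
  rw [repl, SimpleGraph.edgeSet_sup, SimpleGraph.edgeSet_deleteEdges,
    SimpleGraph.edgeSet_fromEdgeSet]
  have : ({s(c, d)} : Set (Sym2 V)) \ Sym2.diagSet = {s(c, d)} := by
    ext g
    simp only [Set.mem_diff, Set.mem_singleton_iff, Set.mem_setOf_eq, and_iff_left_iff_imp]
    rintro rfl
    simpa using hcd
  rw [this, Set.union_comm, ← Set.insert_eq]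

lemma edgeSlide_of {G : SimpleGraph V} {x y z : V} (hxz : x ≠ z) (h1 : G.Adj x y)
    (h2 : G.Adj y z) (h3 : ¬ G.Adj x z) : EdgeSlide G (repl G s(x, y) s(x, z)) :=
  ⟨x, y, z, hxz, h1, h2, h3, rfl⟩

lemma edgeSlide_iff {G G' : SimpleGraph V} :
    EdgeSlide G G' ↔ ∃ x y z : V, x ≠ z ∧ G.Adj x y ∧ G.Adj y z ∧ ¬ G.Adj x z ∧
      G' = repl G s(x, y) s(x, z) := Iff.rfl

lemma sym2_ne {a b c d : V} (h1 : ¬(a = c ∧ b = d)) (h2 : ¬(a = d ∧ b = c)) :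
    s(a, b) ≠ s(c, d) := fun h => by
  rcases Sym2.eq_iff.1 h with h' | h'
  · exact h1 h'
  · exact h2 h'

lemma set_undo {α : Type*} {E : Set α} {e f : α} (he : e ∈ E) (hf : f ∉ E) :
    insert e ((insert f (E \ {e})) \ {f}) = E := by
  ext g
  simp only [Set.mem_insert_iff, Set.mem_diff, Set.mem_singleton_iff]
  constructor
  · rintro (rfl | ⟨(rfl | ⟨hg, -⟩), hgf⟩)
    · exact he
    · exact absurd rfl hgf
    · exact hg
  · intro hg
    by_cases hge : g = e
    · exact Or.inl hge
    · exact Or.inr ⟨Or.inr ⟨hg, hge⟩, fun h => hf (h ▸ hg)⟩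

lemma edgeSlide_symm {G G' : SimpleGraph V} (h : EdgeSlide G G') : EdgeSlide G' G := by
  obtain ⟨x, y, z, hxz, h1, h2, h3, rfl⟩ := h
  rw [show (G.deleteEdges {s(x, y)} ⊔ SimpleGraph.fromEdgeSet {s(x, z)}) =
      repl G s(x, y) s(x, z) from rfl]
  refine ⟨x, z, y, h1.ne, ?_, ?_, ?_, ?_⟩
  · exact (repl_adj _ _ _ _ _).2 (Or.inr ⟨rfl, hxz⟩)
  · exact (repl_adj _ _ _ _ _).2 (Or.inl ⟨h2.symm,
      sym2_ne (fun h => hxz h.1.symm) (fun h => h2.ne' h.1)⟩)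
  · intro hadj
    rcases (repl_adj _ _ _ _ _).1 hadj with ⟨-, hne⟩ | ⟨heq, -⟩
    · exact hne rfl
    · exact h2.ne (Sym2.congr_right.1 heq)
  · refine (SimpleGraph.edgeSet_inj.1 ?_).symm
    rw [show (repl G s(x,y) s(x,z)).deleteEdges {s(x,z)} ⊔ SimpleGraph.fromEdgeSet {s(x,y)} =
      repl (repl G s(x,y) s(x,z)) s(x,z) s(x,y) from rfl]
    rw [repl_edgeSet _ _ h1.ne, repl_edgeSet _ _ hxz]
    exact set_undo ((SimpleGraph.mem_edgeSet G).2 h1) (fun hmem => h3 hmem)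

lemma edgeSlide_ncard [Fintype V] {G G' : SimpleGraph V} (h : EdgeSlide G G') :
    G'.edgeSet.ncard = G.edgeSet.ncard := by
  obtain ⟨x, y, z, hxz, h1, h2, h3, rfl⟩ := h
  rw [show (G.deleteEdges {s(x, y)} ⊔ SimpleGraph.fromEdgeSet {s(x, z)}) =
      repl G s(x, y) s(x, z) from rfl, repl_edgeSet _ _ hxz]
  have hxz' : s(x, z) ∉ G.edgeSet \ {s(x, y)} := fun hm => h3 hm.1
  have hxy : s(x, y) ∈ G.edgeSet := h1
  rw [Set.ncard_insert_of_notMem hxz' (Set.toFinite _),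
    Set.ncard_diff_singleton_of_mem hxy]
  have : 1 ≤ G.edgeSet.ncard := (Set.ncard_pos (Set.toFinite _)).2 ⟨_, hxy⟩
  omega

lemma slides_ncard [Fintype V] {G G' : SimpleGraph V} (h : Relation.ReflTransGen EdgeSlide G G') :
    G'.edgeSet.ncard = G.edgeSet.ncard := by
  induction h with
  | refl => rfl
  | tail _ hstep ih => rw [edgeSlide_ncard hstep, ih]

lemma connected_transport {G G' : SimpleGraph V}
    (h : ∀ a b : V, G.Adj a b → G'.Reachable a b) (hc : G.Connected) : G'.Connected := by
  have hpre : ∀ a b : V, G.Reachable a b → G'.Reachable a b := by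
    intro a b hr
    obtain ⟨w⟩ := hr
    induction w with
    | nil => exact SimpleGraph.Reachable.refl _
    | cons hadj _ ih => exact (h _ _ hadj).trans ih
  haveI : Nonempty V := hc.nonempty
  exact ⟨fun a b => hpre a b (hc.preconnected a b)⟩

lemma edgeSlide_connected {G G' : SimpleGraph V} (h : EdgeSlide G G') (hc : G.Connected) :
    G'.Connected := by
  obtain ⟨x, y, z, hxz, h1, h2, h3, rfl⟩ := h
  rw [show (G.deleteEdges {s(x, y)} ⊔ SimpleGraph.fromEdgeSet {s(x, z)}) =
      repl G s(x, y) s(x, z) from rfl]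
  apply connected_transport _ hc
  intro a b hab
  by_cases hne : s(a, b) = s(x, y)
  · have hx_z : (repl G s(x,y) s(x,z)).Adj x z := (repl_adj _ _ _ _ _).2 (Or.inr ⟨rfl, hxz⟩)
    have hz_y : (repl G s(x,y) s(x,z)).Adj z y :=
      (repl_adj _ _ _ _ _).2 (Or.inl ⟨h2.symm,
        sym2_ne (fun h => hxz h.1.symm) (fun h => h2.ne' h.1)⟩)
    have hreach : (repl G s(x,y) s(x,z)).Reachable x y := (hx_z.reachable).trans hz_y.reachable
    rcases Sym2.eq_iff.1 hne with ⟨rfl, rfl⟩ | ⟨rfl, rfl⟩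
    · exact hreach
    · exact hreach.symm
  · exact ((repl_adj _ _ _ _ _).2 (Or.inl ⟨hab, hne⟩)).reachable

end EdgeSlideAux

namespace EdgeSlideAux

variable {V : Type*} {v1 : V}

lemma set_swap {α : Type*} {E : Set α} {t g b : α} (ht : t ∈ E) (htb : t ≠ b) (hgb : g ≠ b)
    (hgt : g ≠ t) : insert t ((insert g (E \ {t})) \ {b}) = insert g (E \ {b}) := by
  ext x
  simp only [Set.mem_insert_iff, Set.mem_diff, Set.mem_singleton_iff]
  constructor
  · rintro (rfl | ⟨(rfl | ⟨hx, -⟩), hxb⟩)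
    · exact Or.inr ⟨ht, htb⟩
    · exact Or.inl rfl
    · exact Or.inr ⟨hx, hxb⟩
  · rintro (rfl | ⟨hx, hxb⟩)
    · exact Or.inr ⟨Or.inl rfl, hgb⟩
    · by_cases hxt : x = t
      · exact Or.inl hxt
      · exact Or.inr ⟨Or.inr ⟨hx, hxt⟩, hxb⟩

lemma star_repl {G : SimpleGraph V} (hstar : ∀ w, w ≠ v1 → G.Adj v1 w) {a z c d : V}
    (ha : a ≠ v1) (hz : z ≠ v1) (hc : c ≠ v1) (hd : d ≠ v1) :
    ∀ w, w ≠ v1 → (repl G s(a, z) s(c, d)).Adj v1 w := by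
  intro w hw
  exact (repl_adj _ _ _ _ _).2 (Or.inl ⟨hstar w hw,
    sym2_ne (fun h => ha h.1.symm) (fun h => hz h.1.symm)⟩)

/-- The basic maneuver: if `α β` is an edge, `α γ` is not, and the star at `v1` is present,
then two slides (through the center) replace `αβ` by `αγ`. -/
lemma maneuver {G : SimpleGraph V} (hstar : ∀ w, w ≠ v1 → G.Adj v1 w) {α β γ : V}
    (hαβ : G.Adj α β) (hαγ : ¬ G.Adj α γ) (hγα : γ ≠ α) (hγβ : γ ≠ β)
    (hα : α ≠ v1) (hβ : β ≠ v1) (hγ : γ ≠ v1) :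
    Relation.ReflTransGen EdgeSlide G (repl G s(α, β) s(α, γ)) := by
  have hαv1 : G.Adj α v1 := (hstar α hα).symm
  have s1 : EdgeSlide G (repl G s(α, v1) s(α, γ)) :=
    edgeSlide_of (fun h => hγα h.symm) hαv1 (hstar γ hγ) hαγ
  have hF1αβ : (repl G s(α, v1) s(α, γ)).Adj α β :=
    (repl_adj _ _ _ _ _).2 (Or.inl ⟨hαβ, sym2_ne (fun h => hβ h.2) (fun h => hα h.1)⟩)
  have hF1βv1 : (repl G s(α, v1) s(α, γ)).Adj β v1 :=
    (repl_adj _ _ _ _ _).2 (Or.inl ⟨(hstar β hβ).symm,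
      sym2_ne (fun h => hαβ.ne h.1.symm) (fun h => hβ h.1)⟩)
  have hF1αv1 : ¬ (repl G s(α, v1) s(α, γ)).Adj α v1 := by
    intro h
    rcases (repl_adj _ _ _ _ _).1 h with ⟨-, hne⟩ | ⟨heq, -⟩
    · exact hne rfl
    · exact hγ (Sym2.congr_right.1 heq).symm
  have s2 : EdgeSlide (repl G s(α, v1) s(α, γ))
      (repl (repl G s(α, v1) s(α, γ)) s(α, β) s(α, v1)) :=
    edgeSlide_of hα hF1αβ hF1βv1 hF1αv1
  have heq : repl (repl G s(α, v1) s(α, γ)) s(α, β) s(α, v1) = repl G s(α, β) s(α, γ) := by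
    apply SimpleGraph.edgeSet_inj.1
    rw [repl_edgeSet _ _ hα, repl_edgeSet _ _ (fun h => hγα h.symm),
      repl_edgeSet G s(α, β) (fun h => hγα h.symm)]
    exact set_swap (show s(α, v1) ∈ G.edgeSet from hαv1)
      (sym2_ne (fun h => hβ h.2.symm) (fun h => hαβ.ne h.1))
      (sym2_ne (fun h => hγβ h.2) (fun h => hαβ.ne h.1))
      (sym2_ne (fun h => hγ h.2) (fun h => hα h.1))
  have hS := Relation.ReflTransGen.tail (Relation.ReflTransGen.single s1) s2
  rwa [heq] at hS


lemma two_step {G : SimpleGraph V} (hstar : ∀ w, w ≠ v1 → G.Adj v1 w) {a z w q : V}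
    (haz : G.Adj a z) (haw : ¬ G.Adj a w) (hwq : ¬ G.Adj w q)
    (ha : a ≠ v1) (hz : z ≠ v1) (hw : w ≠ v1) (hq : q ≠ v1)
    (hwa : w ≠ a) (hwz : w ≠ z) (hqw : q ≠ w) (hqa : q ≠ a) :
    Relation.ReflTransGen EdgeSlide G (repl G s(a, z) s(w, q)) := by
  have M1 : Relation.ReflTransGen EdgeSlide G (repl G s(a, z) s(a, w)) :=
    maneuver hstar haz haw hwa hwz ha hz hw
  have hstar1 : ∀ w', w' ≠ v1 → (repl G s(a, z) s(a, w)).Adj v1 w' :=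
    star_repl hstar ha hz ha hw
  have hF1wa : (repl G s(a, z) s(a, w)).Adj w a :=
    (repl_adj _ _ _ _ _).2 (Or.inr ⟨Sym2.eq_swap, hwa⟩)
  have hF1wq : ¬ (repl G s(a, z) s(a, w)).Adj w q := by
    intro h
    rcases (repl_adj _ _ _ _ _).1 h with ⟨hG, -⟩ | ⟨heq, -⟩
    · exact hwq hG
    · rcases Sym2.eq_iff.1 heq with ⟨h1, -⟩ | ⟨-, h2⟩
      · exact hwa h1
      · exact hqa h2
  have M2 : Relation.ReflTransGen EdgeSlide (repl G s(a, z) s(a, w))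
      (repl (repl G s(a, z) s(a, w)) s(w, a) s(w, q)) :=
    maneuver hstar1 hF1wa hF1wq hqw hqa hw ha hq
  have heq : repl (repl G s(a, z) s(a, w)) s(w, a) s(w, q) = repl G s(a, z) s(w, q) := by
    apply SimpleGraph.edgeSet_inj.1
    rw [repl_edgeSet _ _ (fun h => hqw h.symm), repl_edgeSet _ _ (fun h => hwa h.symm),
      repl_edgeSet G s(a, z) (fun h => hqw h.symm),
      show s(w, a) = s(a, w) from Sym2.eq_swap,
      Set.insert_diff_self_of_notMem (fun hm => haw hm.1)]
  rw [← heq]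
  exact M1.trans M2

lemma two_step' {G : SimpleGraph V} (hstar : ∀ w, w ≠ v1 → G.Adj v1 w) {a z p q : V}
    (haz : G.Adj a z) (hap : G.Adj a p) (hpq : ¬ G.Adj p q)
    (ha : a ≠ v1) (hz : z ≠ v1) (hp : p ≠ v1) (hq : q ≠ v1)
    (hqp : q ≠ p) (hqa : q ≠ a) (hpz : p ≠ z) :
    Relation.ReflTransGen EdgeSlide G (repl G s(a, z) s(p, q)) := by
  have hpa : p ≠ a := hap.ne'
  have M1 : Relation.ReflTransGen EdgeSlide G (repl G s(p, a) s(p, q)) :=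
    maneuver hstar hap.symm hpq hqp hqa hp ha hq
  have hstar1 : ∀ w', w' ≠ v1 → (repl G s(p, a) s(p, q)).Adj v1 w' :=
    star_repl hstar hp ha hp hq
  have hF1az : (repl G s(p, a) s(p, q)).Adj a z :=
    (repl_adj _ _ _ _ _).2 (Or.inl ⟨haz,
      sym2_ne (fun h => hpa h.1.symm) (fun h => hpz h.2.symm)⟩)
  have hF1ap : ¬ (repl G s(p, a) s(p, q)).Adj a p := by
    intro h
    rcases (repl_adj _ _ _ _ _).1 h with ⟨-, hne⟩ | ⟨heq, -⟩
    · exact hne Sym2.eq_swap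
    · rcases Sym2.eq_iff.1 heq with ⟨h1, -⟩ | ⟨h1, -⟩
      · exact hpa h1.symm
      · exact hqa h1.symm
  have M2 : Relation.ReflTransGen EdgeSlide (repl G s(p, a) s(p, q))
      (repl (repl G s(p, a) s(p, q)) s(a, z) s(a, p)) :=
    maneuver hstar1 hF1az hF1ap hpa hpz ha hz hp
  have heq : repl (repl G s(p, a) s(p, q)) s(a, z) s(a, p) = repl G s(a, z) s(p, q) := by
    apply SimpleGraph.edgeSet_inj.1
    rw [repl_edgeSet _ _ (fun h => hpa h.symm), repl_edgeSet _ _ (fun h => hqp h.symm),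
      repl_edgeSet G s(a, z) (fun h => hqp h.symm),
      show s(p, a) = s(a, p) from Sym2.eq_swap]
    exact set_swap (show s(a, p) ∈ G.edgeSet from hap)
      (sym2_ne (fun h => hpz h.2) (fun h => haz.ne h.1))
      (sym2_ne (fun h => hpa h.1) (fun h => hpz h.1))
      (sym2_ne (fun h => hpa h.1) (fun h => hqa h.2))
  rw [← heq]
  exact M1.trans M2

lemma key {G : SimpleGraph V} (hstar : ∀ w, w ≠ v1 → G.Adj v1 w) {a z p q : V}
    (haz : G.Adj a z) (hpq : ¬ G.Adj p q) (hpq' : p ≠ q) (hef : s(a, z) ≠ s(p, q))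
    (ha : a ≠ v1) (hz : z ≠ v1) (hp : p ≠ v1) (hq : q ≠ v1) :
    Relation.ReflTransGen EdgeSlide G (repl G s(a, z) s(p, q)) := by
  by_cases hap : a = p
  · rw [show s(p, q) = s(a, q) by rw [hap]]
    exact maneuver hstar haz (fun h => hpq (hap ▸ h))
      (fun h => hpq' (hap.symm.trans h.symm))
      (fun h => hef (by rw [hap, ← h])) ha hz hq
  by_cases haq : a = q
  · rw [show s(p, q) = s(a, p) by rw [← haq]; exact Sym2.eq_swap]
    exact maneuver hstar haz (fun h => hpq (haq ▸ h.symm))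
      (fun h => hpq' (h.trans haq))
      (fun h => hef (by rw [haq, ← h]; exact Sym2.eq_swap)) ha hz hp
  by_cases hzp : z = p
  · rw [show s(a, z) = s(z, a) from Sym2.eq_swap, show s(p, q) = s(z, q) by rw [hzp]]
    exact maneuver hstar haz.symm (fun h => hpq (hzp ▸ h))
      (fun h => hpq' (hzp.symm.trans h.symm))
      (fun h => hef (by rw [← hzp, ← h]; exact Sym2.eq_swap)) hz ha hq
  by_cases hzq : z = q
  · rw [show s(a, z) = s(z, a) from Sym2.eq_swap,
      show s(p, q) = s(z, p) by rw [hzq]; exact Sym2.eq_swap]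
    exact maneuver hstar haz.symm (fun h => hpq (hzq ▸ h.symm))
      (fun h => hpq' (h.trans hzq))
      (fun h => hef (by rw [← h, hzq])) hz ha hp
  have hpa : p ≠ a := fun h => hap h.symm
  have hqa2 : q ≠ a := fun h => haq h.symm
  have hpz : p ≠ z := fun h => hzp h.symm
  by_cases h1 : G.Adj a p
  · exact two_step' hstar haz h1 hpq ha hz hp hq (fun h => hpq' h.symm) hqa2 hpz
  · exact two_step hstar haz h1 hpq ha hz hp hq hpa hpz (fun h => hpq' h.symm) hqa2

lemma sym2_exists (e : Sym2 V) : ∃ a b : V, e = s(a, b) := by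
  induction e using Sym2.ind with
  | _ a b => exact ⟨a, b, rfl⟩

lemma slides_symm {G G' : SimpleGraph V} (h : Relation.ReflTransGen EdgeSlide G G') :
    Relation.ReflTransGen EdgeSlide G' G := by
  induction h with
  | refl => exact Relation.ReflTransGen.refl
  | tail _ hstep ih => exact Relation.ReflTransGen.head (edgeSlide_symm hstep) ih

lemma star_exchange [Fintype V] (v1 : V) :
    ∀ (n : ℕ) (H₁ H₂ : SimpleGraph V), (∀ w, w ≠ v1 → H₁.Adj v1 w) →
      (∀ w, w ≠ v1 → H₂.Adj v1 w) → H₁.edgeSet.ncard = H₂.edgeSet.ncard →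
      (H₁.edgeSet \ H₂.edgeSet).ncard = n → Relation.ReflTransGen EdgeSlide H₁ H₂ := by
  intro n
  induction n with
  | zero =>
    intro H₁ H₂ _ _ hcard hd
    have hsub : H₁.edgeSet ⊆ H₂.edgeSet :=
      Set.diff_eq_empty.1 ((Set.ncard_eq_zero (Set.toFinite _)).1 hd)
    have heq : H₁.edgeSet = H₂.edgeSet :=
      Set.eq_of_subset_of_ncard_le hsub (le_of_eq hcard.symm) (Set.toFinite _)
    rw [SimpleGraph.edgeSet_inj.1 heq]
  | succ n ih =>
    intro H₁ H₂ hstar1 hstar2 hcard hd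
    obtain ⟨e, he⟩ : (H₁.edgeSet \ H₂.edgeSet).Nonempty :=
      Set.nonempty_of_ncard_ne_zero (by omega)
    obtain ⟨f, hf⟩ : (H₂.edgeSet \ H₁.edgeSet).Nonempty := by
      rcases Set.eq_empty_or_nonempty (H₂.edgeSet \ H₁.edgeSet) with hem | hne
      · exfalso
        have hsub : H₂.edgeSet ⊆ H₁.edgeSet := Set.diff_eq_empty.1 hem
        have heq2 : H₂.edgeSet = H₁.edgeSet :=
          Set.eq_of_subset_of_ncard_le hsub (le_of_eq hcard) (Set.toFinite _)
        rw [← heq2] at he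
        exact he.2 he.1
      · exact hne
    obtain ⟨a, z, rfl⟩ := sym2_exists e
    obtain ⟨p, q, rfl⟩ := sym2_exists f
    have haz : H₁.Adj a z := he.1
    have hpq2 : H₂.Adj p q := hf.1
    have hpq1 : ¬ H₁.Adj p q := fun h => hf.2 h
    have hpq' : p ≠ q := hpq2.ne
    have ha : a ≠ v1 := by
      rintro rfl
      exact he.2 (hstar2 z haz.ne.symm)
    have hz : z ≠ v1 := by
      rintro rfl
      exact he.2 (by rw [Sym2.eq_swap]; exact hstar2 a haz.ne)
    have hp : p ≠ v1 := by
      rintro rfl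
      exact hpq1 (hstar1 q hpq2.ne.symm)
    have hq : q ≠ v1 := by
      rintro rfl
      exact hpq1 (hstar1 p hpq2.ne).symm
    have hef : s(a, z) ≠ s(p, q) := fun h => he.2 (by rw [h]; exact hf.1)
    have hS1 : Relation.ReflTransGen EdgeSlide H₁ (repl H₁ s(a, z) s(p, q)) :=
      key hstar1 haz hpq1 hpq' hef ha hz hp hq
    have hFE : (repl H₁ s(a, z) s(p, q)).edgeSet = insert s(p, q) (H₁.edgeSet \ {s(a, z)}) :=
      repl_edgeSet _ _ hpq'
    have hstarF : ∀ w, w ≠ v1 → (repl H₁ s(a, z) s(p, q)).Adj v1 w :=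
      star_repl hstar1 ha hz hp hq
    have hFcard : (repl H₁ s(a, z) s(p, q)).edgeSet.ncard = H₂.edgeSet.ncard := by
      rw [hFE, Set.ncard_insert_of_notMem (fun hm => hpq1 hm.1) (Set.toFinite _),
        Set.ncard_diff_singleton_of_mem he.1, ← hcard]
      have hpos : 0 < H₁.edgeSet.ncard := (Set.ncard_pos (Set.toFinite _)).2 ⟨_, he.1⟩
      omega
    have hFd : ((repl H₁ s(a, z) s(p, q)).edgeSet \ H₂.edgeSet).ncard = n := by
      rw [hFE, Set.insert_diff_of_mem _ hf.1, Set.diff_diff_comm,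
        Set.ncard_diff_singleton_of_mem he, hd]
      omega
    exact hS1.trans (ih _ H₂ hstarF hstar2 hFcard hFd)

lemma find_frontier_aux {G : SimpleGraph V} {u t : V} (p : G.Walk u t) :
    ∀ v1, t = v1 → u ≠ v1 → ¬ G.Adj v1 u →
    ∃ w s, w ≠ v1 ∧ ¬ G.Adj v1 w ∧ G.Adj s w ∧ G.Adj v1 s := by
  induction p with
  | nil =>
    intro v1 ht hu _
    exact absurd ht hu
  | @cons u' b _ hadj pw ih =>
    intro v1 ht hu hnadj
    by_cases hb : b = v1
    · subst hb
      exact absurd hadj.symm hnadj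
    · by_cases hb2 : G.Adj v1 b
      · exact ⟨u', b, hu, hnadj, hadj.symm, hb2⟩
      · exact ih v1 ht hb hb2

lemma build_star [Fintype V] (v1 : V) :
    ∀ (n : ℕ) (G : SimpleGraph V), G.Connected →
      {w : V | w ≠ v1 ∧ ¬ G.Adj v1 w}.ncard = n →
      ∃ H, Relation.ReflTransGen EdgeSlide G H ∧ (∀ w, w ≠ v1 → H.Adj v1 w) := by
  intro n
  induction n with
  | zero =>
    intro G _ h0
    refine ⟨G, Relation.ReflTransGen.refl, fun w hw => ?_⟩
    by_contra hadj
    have hmem : w ∈ {w : V | w ≠ v1 ∧ ¬ G.Adj v1 w} := ⟨hw, hadj⟩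
    rw [(Set.ncard_eq_zero (Set.toFinite _)).1 h0] at hmem
    exact hmem
  | succ n ih =>
    intro G hc hcard
    obtain ⟨w₀, hw₀, hnadj₀⟩ : {w : V | w ≠ v1 ∧ ¬ G.Adj v1 w}.Nonempty :=
      Set.nonempty_of_ncard_ne_zero (by omega)
    obtain ⟨p⟩ := hc.preconnected w₀ v1
    obtain ⟨w, s, hwv1, hwnadj, hsw, hv1s⟩ := find_frontier_aux p v1 rfl hw₀ hnadj₀
    have hslide : EdgeSlide G (repl G s(w, s) s(w, v1)) :=
      edgeSlide_of hwv1 hsw.symm hv1s.symm (fun h => hwnadj h.symm)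
    have hFc : (repl G s(w, s) s(w, v1)).Connected := edgeSlide_connected hslide hc
    have hFadj : ∀ w', (repl G s(w, s) s(w, v1)).Adj v1 w' ↔ (G.Adj v1 w' ∨ w' = w) := by
      intro w'
      rw [repl_adj]
      constructor
      · rintro (⟨h, -⟩ | ⟨heq, -⟩)
        · exact Or.inl h
        · rcases Sym2.eq_iff.1 heq with ⟨h1, -⟩ | ⟨-, h2⟩
          · exact absurd h1.symm hwv1
          · exact Or.inr h2
      · rintro (h | rfl)
        · exact Or.inl ⟨h, sym2_ne (fun hh => hwv1 hh.1.symm) (fun hh => hv1s.ne hh.1)⟩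
        · exact Or.inr ⟨Sym2.eq_swap, fun hh => hwv1 hh.symm⟩
    have hset : {w' : V | w' ≠ v1 ∧ ¬ (repl G s(w, s) s(w, v1)).Adj v1 w'}
        = {w' : V | w' ≠ v1 ∧ ¬ G.Adj v1 w'} \ {w} := by
      ext w'
      simp only [Set.mem_setOf_eq, Set.mem_diff, Set.mem_singleton_iff, hFadj w']
      constructor
      · rintro ⟨h1, h2⟩
        exact ⟨⟨h1, fun hA => h2 (Or.inl hA)⟩, fun hB => h2 (Or.inr hB)⟩
      · rintro ⟨⟨h1, h2⟩, h3⟩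
        exact ⟨h1, fun h => h.elim h2 h3⟩
    have hcard' : {w' : V | w' ≠ v1 ∧ ¬ (repl G s(w, s) s(w, v1)).Adj v1 w'}.ncard = n := by
      rw [hset, Set.ncard_diff_singleton_of_mem
        (show w ∈ {w' : V | w' ≠ v1 ∧ ¬ G.Adj v1 w'} from ⟨hwv1, hwnadj⟩),
        hcard]
      omega
    obtain ⟨H, hSH, hstarH⟩ := ih _ hFc hcard'
    exact ⟨H, Relation.ReflTransGen.head hslide hSH, hstarH⟩

end EdgeSlideAux


/-- Any move of a single edge which preserves connectedness is a combination of edge slides. -/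
theorem edge_move_is_combination_of_slides {V : Type*} [Fintype V] (G : SimpleGraph V)
    (hc : G.Connected)
    (u v x y : V) (huv : G.Adj u v) (hxy : x ≠ y) (hnadj : ¬ G.Adj x y)
    (hconn : (G.deleteEdges {s(u, v)} ⊔ SimpleGraph.fromEdgeSet {s(x, y)}).Connected) :
    Relation.ReflTransGen EdgeSlide G
      (G.deleteEdges {s(u, v)} ⊔ SimpleGraph.fromEdgeSet {s(x, y)}) := by
  open EdgeSlideAux in
  show Relation.ReflTransGen EdgeSlide G (EdgeSlideAux.repl G s(u, v) s(x, y))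
  have hconn' : (EdgeSlideAux.repl G s(u, v) s(x, y)).Connected := hconn
  have hcardG' : (EdgeSlideAux.repl G s(u, v) s(x, y)).edgeSet.ncard = G.edgeSet.ncard := by
    rw [EdgeSlideAux.repl_edgeSet _ _ hxy,
      Set.ncard_insert_of_notMem (fun hm => hnadj hm.1) (Set.toFinite _),
      Set.ncard_diff_singleton_of_mem (show s(u, v) ∈ G.edgeSet from huv)]
    have hpos : 0 < G.edgeSet.ncard :=
      (Set.ncard_pos (Set.toFinite _)).2 ⟨_, (show s(u, v) ∈ G.edgeSet from huv)⟩
    omega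
  obtain ⟨H₁, hS1, hstar1⟩ := EdgeSlideAux.build_star u _ G hc rfl
  obtain ⟨H₂, hS2, hstar2⟩ :=
    EdgeSlideAux.build_star u _ (EdgeSlideAux.repl G s(u, v) s(x, y)) hconn' rfl
  have hcc : H₁.edgeSet.ncard = H₂.edgeSet.ncard := by
    rw [EdgeSlideAux.slides_ncard hS1, EdgeSlideAux.slides_ncard hS2, hcardG']
  have hmid := EdgeSlideAux.star_exchange u _ H₁ H₂ hstar1 hstar2 hcc rfl
  exact (hS1.trans hmid).trans (EdgeSlideAux.slides_symm hS2)
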